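/- Let f ∈ M = ⟨x_1,...,x_n⟩ with Lin_M(f) ≠ 0 and let z ∈ indets(Lin_M(f)). Then f is z-separating (i.e., z does not divide any term in the support of tail_z(f) = z - (1/c)f, where c is the coefficient of z in f) if and only if there exists a term ordering σ on P such that z = LT_σ(f). -/

import Mathlib

open MvPolynomial

/-- A term ordering on the monomials of `K[x_1,...,x_n]`: a linear order on
exponent vectors compatible with addition and with `1` as smallest term. -/
structure TermOrder (n : ℕ) where
  le : (Fin n →₀ ℕ) → (Fin n →₀ ℕ) → Prop
  le_refl : ∀ m, le m m
  le_trans : ∀ a b c, le a b → le b c → le a c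
  le_antisymm : ∀ a b, le a b → le b a → a = b
  le_total : ∀ a b, le a b ∨ le b a
  add_le_add : ∀ a b c, le a b → le (a + c) (b + c)
  zero_le : ∀ m, le 0 m

variable {K : Type*} [Field K] {n s : ℕ}

/-- `m` is the `σ`-leading term of `f`. -/
def TermOrder.IsLeadingTerm (σ : TermOrder n) (f : MvPolynomial (Fin n) K)
    (m : Fin n →₀ ℕ) : Prop :=
  m ∈ f.support ∧ ∀ m' ∈ f.support, σ.le m' m

/-- `G` is a `σ`-Gröbner basis of the set `S` (typically an ideal or an
elimination ideal): `G ⊆ S` and the leading term of every nonzero element of `S`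
is divisible by the leading term of some element of `G`. -/
def IsGBOn (σ : TermOrder n) (S G : Set (MvPolynomial (Fin n) K)) : Prop :=
  G ⊆ S ∧ ∀ f ∈ S, f ≠ 0 → ∃ g ∈ G, ∃ mg mf, σ.IsLeadingTerm g mg ∧
    σ.IsLeadingTerm f mf ∧ mg ≤ mf

/-- `G` is the reduced `σ`-Gröbner basis of `S`: a monic, fully interreduced
`σ`-Gröbner basis. -/
def IsReducedGBOn (σ : TermOrder n) (S G : Set (MvPolynomial (Fin n) K)) : Prop :=
  IsGBOn σ S G ∧
  (∀ g ∈ G, ∃ m, σ.IsLeadingTerm g m ∧ MvPolynomial.coeff m g = 1) ∧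
  (∀ g ∈ G, ∀ m ∈ g.support, ∀ g' ∈ G, ∀ m', σ.IsLeadingTerm g' m' → m' ≤ m →
    g' = g ∧ m' = m)

/-- The indeterminate `z` divides some term in the support of `f`. -/
def Occurs (z : Fin n) (f : MvPolynomial (Fin n) K) : Prop :=
  ∃ m ∈ f.support, m z ≠ 0

/-- `tail_z(f) = z - (1/c) f`, where `c` is the coefficient of `z` in `f`. -/
noncomputable def tailTo (f : MvPolynomial (Fin n) K) (z : Fin n) :
    MvPolynomial (Fin n) K :=
  X z - (MvPolynomial.coeff (Finsupp.single z 1) f)⁻¹ • f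

/-- `f` is `z`-separating: the coefficient of `z` in `f` is nonzero and `z`
divides no term in the support of `tail_z(f)`. -/
def IsSeparating (f : MvPolynomial (Fin n) K) (z : Fin n) : Prop :=
  MvPolynomial.coeff (Finsupp.single z 1) f ≠ 0 ∧ ¬ Occurs z (tailTo f z)

/-- `(f_1,...,f_s)` is coherently `Z`-separating for `Z = {z_1,...,z_s}`. -/
def CoherentlySeparating (z : Fin s → Fin n) (f : Fin s → MvPolynomial (Fin n) K) : Prop :=
  Function.Injective z ∧ (∀ i, f i ≠ 0 ∧ IsSeparating (f i) (z i)) ∧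
  ∀ i j, j ≠ i → ¬ Occurs (z i) (f j)

/-- The `M`-linear part of `f` for `M = ⟨x_1-a_1,...,x_n-a_n⟩`. -/
noncomputable def linPart (a : Fin n → K) (f : MvPolynomial (Fin n) K) :
    MvPolynomial (Fin n) K :=
  (MvPolynomial.aeval fun i => X i - C (a i))
    (MvPolynomial.homogeneousComponent 1 ((MvPolynomial.aeval fun i => X i + C (a i)) f))

/-- The `M`-linear part of an ideal `I`: the `K`-span of `{Lin_M(f) : f ∈ I}`. -/
noncomputable def linSpace (a : Fin n → K) (I : Ideal (MvPolynomial (Fin n) K)) :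
    Submodule K (MvPolynomial (Fin n) K) :=
  Submodule.span K (linPart a '' (I : Set (MvPolynomial (Fin n) K)))

/-- The linear maximal ideal `M = ⟨x_1-a_1,...,x_n-a_n⟩`. -/
noncomputable def linMaxIdeal (a : Fin n → K) : Ideal (MvPolynomial (Fin n) K) :=
  Ideal.span (Set.range fun i => X i - C (a i))

/-- `M_1`, the `K`-vector space spanned by `x_1-a_1,...,x_n-a_n`. -/
noncomputable def linForms (a : Fin n → K) : Submodule K (MvPolynomial (Fin n) K) :=
  Submodule.span K (Set.range fun i => X i - C (a i))

/-- The elimination ideal `I ∩ K[X∖Z]`, viewed as the set of polynomials of `I`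
in which no indeterminate of `Z` occurs. -/
def elimSet (z : Fin s → Fin n) (I : Ideal (MvPolynomial (Fin n) K)) :
    Set (MvPolynomial (Fin n) K) :=
  {p | p ∈ I ∧ ∀ i, ¬ Occurs (z i) p}

/-- `r` is the normal form of `p` with respect to (the reduced Gröbner basis of)
`S`: `p - r ∈ S` and no term of `r` is divisible by a leading term of `S`. -/
def IsNormalFormOn (σ : TermOrder n) (S : Set (MvPolynomial (Fin n) K))
    (p r : MvPolynomial (Fin n) K) : Prop :=
  p - r ∈ S ∧ ∀ f ∈ S, f ≠ 0 → ∀ mf m, σ.IsLeadingTerm f mf → m ∈ r.support → ¬ mf ≤ m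

/-- `σ` is a `Z`-separating term ordering for `I`. -/
def IsZSepOrder (σ : TermOrder n) (z : Fin s → Fin n)
    (I : Ideal (MvPolynomial (Fin n) K)) : Prop :=
  ∃ p : Fin s → MvPolynomial (Fin n) K,
    (∀ i, p i ∈ I ∧ p i ≠ 0 ∧ σ.IsLeadingTerm (p i) (Finsupp.single (z i) 1)) ∧
    CoherentlySeparating z p

open Classical in
/-- The substitution `x_i ↦ x_i` for `x_i ∉ Z` and `z_j ↦ tail_{z_j}(f_j)`. -/
noncomputable def subMap (z : Fin s → Fin n) (f : Fin s → MvPolynomial (Fin n) K)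
    (i : Fin n) : MvPolynomial (Fin n) K :=
  if h : ∃ j, z j = i then tailTo (f h.choose) (z h.choose) else X i

open Classical in
/-- The projection of `P` onto `P̂ = K[X∖Z]`. -/
noncomputable def killZ (z : Fin s → Fin n) :
    MvPolynomial (Fin n) K →ₐ[K] MvPolynomial {i : Fin n // ¬ ∃ j, z j = i} K :=
  MvPolynomial.aeval fun i => if h : ∃ j, z j = i then 0 else X ⟨i, h⟩

/-- The elimination ideal `I ∩ P̂` as an ideal of `P̂ = K[X∖Z]`. -/
noncomputable def elimIdeal (z : Fin s → Fin n) (I : Ideal (MvPolynomial (Fin n) K)) :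
    Ideal (MvPolynomial {i : Fin n // ¬ ∃ j, z j = i} K) :=
  Ideal.comap (MvPolynomial.rename
    (Subtype.val : {i : Fin n // ¬ ∃ j, z j = i} → Fin n)).toRingHom I

/-- The composition `ψ : P → P̂ → P̂/(I ∩ P̂)` of the substitution
`z_j ↦ tail_{z_j}(f_j)` with the canonical projection. -/
noncomputable def reembedHom (z : Fin s → Fin n) (f : Fin s → MvPolynomial (Fin n) K)
    (I : Ideal (MvPolynomial (Fin n) K)) :
    MvPolynomial (Fin n) K →+*
      (MvPolynomial {i : Fin n // ¬ ∃ j, z j = i} K ⧸ elimIdeal z I) :=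
  (Ideal.Quotient.mk (elimIdeal z I)).comp
    (((killZ z).comp (MvPolynomial.aeval (subMap z f))).toRingHom)

/-- The cotangent space `m/m²` as a `K`-vector space. -/
abbrev cotSpace (K : Type*) [Field K] {R : Type*} [CommRing R] [Algebra K R]
    (m : Ideal R) :=
  (m.restrictScalars K) ⧸
    Submodule.comap (Submodule.subtype (m.restrictScalars K)) ((m ^ 2).restrictScalars K)

/-- The embedding dimension of an affine `K`-algebra `R`: the minimal number `m`
of indeterminates of a presentation `R ≅ K[y_1,...,y_m]/I'`. -/
noncomputable def edim (K : Type*) [Field K] (R : Type*) [CommRing R] [Algebra K R] : ℕ :=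
  sInf {m | ∃ I' : Ideal (MvPolynomial (Fin m) K),
    Nonempty (R ≃ₐ[K] (MvPolynomial (Fin m) K ⧸ I'))}

/-- A marked reduced Gröbner basis of `I`: a reduced `σ`-Gröbner basis together
with the marking of the `σ`-leading term of each element. -/
def IsMarkedReducedGB (I : Ideal (MvPolynomial (Fin n) K))
    (G : Set ((Fin n →₀ ℕ) × MvPolynomial (Fin n) K)) : Prop :=
  ∃ σ : TermOrder n, IsReducedGBOn σ (I : Set (MvPolynomial (Fin n) K)) (Prod.snd '' G) ∧
    ∀ p ∈ G, σ.IsLeadingTerm p.2 p.1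

/-- The lexicographic term order with `z` as the most significant variable. -/
noncomputable def sepOrder {n : ℕ} (z : Fin n) : TermOrder n where
  le a b := toLex (Finsupp.domCongr (α := Fin n) (M := ℕ) (Equiv.swap z ⟨0, z.pos⟩) a) ≤
    toLex (Finsupp.domCongr (Equiv.swap z ⟨0, z.pos⟩) b)
  le_refl _ := le_refl _
  le_trans _ _ _ h1 h2 := le_trans h1 h2
  le_antisymm a b h1 h2 := by
    have := le_antisymm h1 h2
    have := toLex.injective this
    exact (Finsupp.domCongr (Equiv.swap z ⟨0, z.pos⟩)).injective this
  le_total a b := le_total _ _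
  add_le_add a b c h := by
    rw [(Finsupp.domCongr (Equiv.swap z ⟨0, z.pos⟩)).map_add,
      (Finsupp.domCongr (Equiv.swap z ⟨0, z.pos⟩)).map_add, toLex_add, toLex_add]
    exact add_le_add_left h _
  zero_le m := by
    have h0 : (Finsupp.domCongr (α := Fin n) (M := ℕ) (Equiv.swap z ⟨0, z.pos⟩)) 0 = 0 :=
      map_zero _
    rw [h0, toLex_zero]
    exact bot_le (a := toLex (Finsupp.domCongr (Equiv.swap z ⟨0, z.pos⟩) m))

lemma sepOrder_lt_single {n : ℕ} (z : Fin n) (m : Fin n →₀ ℕ) (hm : m z = 0) :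
    (sepOrder z).le m (Finsupp.single z 1) := by
  refine le_of_lt (Finsupp.Lex.lt_iff.mpr ⟨⟨0, z.pos⟩, fun j hj => absurd hj (by
    simp [Fin.lt_def, Nat.not_lt_zero, Fin.le_def]), ?_⟩)
  simp only [ofLex_toLex, Finsupp.domCongr_apply, Finsupp.equivMapDomain_apply,
    Equiv.symm_swap, Equiv.swap_apply_right]
  rw [hm, Finsupp.single_eq_same]
  exact Nat.zero_lt_one

/-- For `f ∈ M = ⟨x_1,...,x_n⟩` with `Lin_M(f) ≠ 0` and `z` an
indeterminate of `Lin_M(f)`: `f` is `z`-separating iff `z` is the `σ`-leading term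
of `f` for some term ordering `σ`. -/
theorem statement6 (f : MvPolynomial (Fin n) K) (hf : f ∈ linMaxIdeal (0 : Fin n → K))
    (hlin : linPart (0 : Fin n → K) f ≠ 0) (z : Fin n)
    (hz : MvPolynomial.coeff (Finsupp.single z 1) (linPart (0 : Fin n → K) f) ≠ 0) :
    ¬ Occurs z (tailTo f z) ↔
      ∃ σ : TermOrder n, σ.IsLeadingTerm f (Finsupp.single z 1) := by
  classical
  -- `linPart 0 f` is the degree-1 homogeneous component of `f`
  have hlp : linPart (0 : Fin n → K) f = MvPolynomial.homogeneousComponent 1 f := by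
    simp [linPart, sub_zero, add_zero, MvPolynomial.aeval_X_left_apply]
  have hc : MvPolynomial.coeff (Finsupp.single z 1) f ≠ 0 := by
    rw [hlp, MvPolynomial.coeff_homogeneousComponent] at hz
    intro h
    rw [h] at hz
    simp at hz
  set c := MvPolynomial.coeff (Finsupp.single z 1) f with hcdef
  have hmem : Finsupp.single z 1 ∈ f.support := MvPolynomial.mem_support_iff.mpr hc
  -- coefficients of the tail
  have hcoefftail : ∀ m, MvPolynomial.coeff m (tailTo f z) =
      (if Finsupp.single z 1 = m then 1 else 0) - c⁻¹ * MvPolynomial.coeff m f := by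
    intro m
    simp [tailTo, MvPolynomial.coeff_sub, MvPolynomial.coeff_smul, MvPolynomial.coeff_X',
      smul_eq_mul, ← hcdef]
  have hsingle_not : MvPolynomial.coeff (Finsupp.single z 1) (tailTo f z) = 0 := by
    rw [hcoefftail, if_pos rfl, ← hcdef, inv_mul_cancel₀ hc, sub_self]
  constructor
  · intro hocc
    refine ⟨sepOrder z, hmem, fun m' hm' => ?_⟩
    by_cases hne : m' = Finsupp.single z 1
    · subst hne; exact (sepOrder z).le_refl _
    · have hmz : m' z = 0 := by
        by_contra hmz
        exact hocc ⟨m', MvPolynomial.mem_support_iff.mpr (by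
          rw [hcoefftail, if_neg (fun h => hne h.symm), zero_sub, neg_ne_zero]
          exact mul_ne_zero (inv_ne_zero hc) (MvPolynomial.mem_support_iff.mp hm')), hmz⟩
      exact sepOrder_lt_single z m' hmz
  · rintro ⟨σ, hsup, hmax⟩ ⟨m, hm, hmz⟩
    have hne : m ≠ Finsupp.single z 1 := by
      intro h; rw [h] at hm
      exact MvPolynomial.mem_support_iff.mp hm hsingle_not
    have hmf : m ∈ f.support := by
      refine MvPolynomial.mem_support_iff.mpr fun h0 => ?_
      have := MvPolynomial.mem_support_iff.mp hm
      rw [hcoefftail, if_neg (fun h => hne h.symm), h0, mul_zero, sub_self] at this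
      exact this rfl
    -- `single z 1 ≤ m` pointwise, hence `σ.le (single z 1) m`
    have hle : Finsupp.single z 1 ≤ m := Finsupp.single_le_iff.mpr (Nat.one_le_iff_ne_zero.mpr hmz)
    have hdecomp : m - Finsupp.single z 1 + Finsupp.single z 1 = m := tsub_add_cancel_of_le hle
    have h1 : σ.le (0 + Finsupp.single z 1) (m - Finsupp.single z 1 + Finsupp.single z 1) :=
      σ.add_le_add _ _ _ (σ.zero_le _)
    rw [zero_add, hdecomp] at h1
    exact hne (σ.le_antisymm _ _ (hmax m hmf) h1)
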